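/- Let p and q be probability distributions on ℤ supported on the nonnegative integers. Then the following are equivalent: (i) there exists a probability distribution w on ℤ such that p(n) = Σ_{k∈ℤ} w(k)·q(n−k) for all n ∈ ℤ (i.e., p is a mixture of integer shifts Υ_k q of q); (ii) (p*q̃)(n) ≥ 0 for all n ∈ ℤ (i.e., p ≻_a q). -/

import Mathlib

open scoped ENNReal NNReal


/-- Convolution of two sequences on `ℤ`: `(a*b)(n) = ∑_{k∈ℤ} a(k)·b(n−k)`.
For supported-below sequences this `tsum` has finitely many nonzero terms. -/
noncomputable def conv (a b : ℤ → ℝ) : ℤ → ℝ := fun n => ∑' k : ℤ, a k * b (n - k)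

/-- A sequence is supported below if it vanishes for all sufficiently negative indices. -/
def SuppBelow (a : ℤ → ℝ) : Prop := ∃ N : ℤ, ∀ n : ℤ, n < N → a n = 0

/-- A probability distribution on `ℤ`: nonnegative with total sum 1. -/
def IsProbDist (p : ℤ → ℝ) : Prop := (∀ n : ℤ, 0 ≤ p n) ∧ HasSum p 1

/-- `qt` is the reciprocal sequence `q̃` of `q`, relative to `nstar = n_*(q)`,
the least index where `q` is positive: `q̃` vanishes below `−n_*(q)` and
`(q̃*q)(n) = δ_{n,0}` for all `n`. -/
def IsRecip (q qt : ℤ → ℝ) (nstar : ℤ) : Prop :=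
  IsLeast {n : ℤ | 0 < q n} nstar ∧ (∀ n : ℤ, n < -nstar → qt n = 0) ∧
  (∀ n : ℤ, conv qt q n = if n = 0 then (1 : ℝ) else 0)

/-- The generalized Poisson sequence `P_λ : ℤ → ℝ`,
`P_λ(n) = e^{−λ}·λ^n/n!` for `n ≥ 0` and `P_λ(n) = 0` for `n < 0`. -/
noncomputable def poisson (lam : ℝ) : ℤ → ℝ :=
  fun n => if 0 ≤ n then Real.exp (-lam) * lam ^ n.toNat / (Nat.factorial n.toNat : ℝ) else 0

noncomputable def toHahn (a : ℤ → ℝ) (N : ℤ) (h : ∀ n : ℤ, n < N → a n = 0) :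
    HahnSeries ℤ ℝ :=
  ⟨a, Set.IsWF.isPWO (BddBelow.wellFoundedOn_lt
    ⟨N, fun n hn => not_lt.mp (fun hlt => hn (h n hlt))⟩)⟩

@[simp] lemma toHahn_coeff (a : ℤ → ℝ) (N : ℤ) (h : ∀ n : ℤ, n < N → a n = 0) :
    (toHahn a N h).coeff = a := rfl

lemma conv_eq (A B : HahnSeries ℤ ℝ) (n : ℤ) :
    conv A.coeff B.coeff n = (A * B).coeff n := by
  classical
  rw [HahnSeries.coeff_mul, conv]
  set s := Finset.antidiagonal A.isPWO_support B.isPWO_support n with hs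
  have h1 : ∑' k : ℤ, A.coeff k * B.coeff (n - k)
      = ∑ k ∈ s.image Prod.fst, A.coeff k * B.coeff (n - k) := by
    apply tsum_eq_sum
    intro k hk
    by_contra hne
    apply hk
    refine Finset.mem_image.2 ⟨(k, n - k), ?_, rfl⟩
    rw [hs, Finset.mem_addAntidiagonal]
    refine ⟨?_, ?_, by ring⟩
    · intro hA; exact hne (by simp [hA])
    · intro hB; exact hne (by simp [hB])
  rw [h1, Finset.sum_image (fun x hx y hy hxy => ?_)]
  · apply Finset.sum_congr rfl
    intro ij hij
    rw [hs, Finset.mem_addAntidiagonal] at hij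
    have : ij.2 = n - ij.1 := by omega
    rw [this]
  · rw [hs, Finset.mem_coe, Finset.mem_addAntidiagonal] at hx hy
    have : x.2 = y.2 := by omega
    exact Prod.ext hxy this

/-- for probability distributions `p, q` supported on the
nonnegative integers, `p` is a mixture of integer shifts of `q` (i.e. there is
a probability distribution `w` on `ℤ` with `p(n) = ∑_k w(k)·q(n−k)`) if and
only if `(p*q̃)(n) ≥ 0` for all `n`, i.e. `p ≻_a q`. -/
theorem mixture_iff_amaj (p q qt : ℤ → ℝ) (nq : ℤ)
    (hp : IsProbDist p) (hq : IsProbDist q)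
    (hp0 : ∀ n : ℤ, n < 0 → p n = 0) (hq0 : ∀ n : ℤ, n < 0 → q n = 0)
    (hqt : IsRecip q qt nq) :
    (∃ w : ℤ → ℝ, IsProbDist w ∧ ∀ n : ℤ, p n = ∑' k : ℤ, w k * q (n - k)) ↔
      (∀ n : ℤ, 0 ≤ conv p qt n) := by
  classical
  obtain ⟨⟨hqnq, hnqle⟩, hqt0, hqtq⟩ := hqt
  have hnq0 : 0 ≤ nq := by
    by_contra h
    exact absurd (hq0 nq (by omega)) (ne_of_gt hqnq)
  set P : HahnSeries ℤ ℝ := toHahn p 0 hp0 with hP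
  set Q : HahnSeries ℤ ℝ := toHahn q 0 hq0 with hQ
  set QT : HahnSeries ℤ ℝ := toHahn qt (-nq) hqt0 with hQT
  have hQTQ : QT * Q = 1 := by
    apply HahnSeries.coeff_injective
    funext n
    rw [← conv_eq]
    show conv qt q n = _
    rw [hqtq n, HahnSeries.coeff_one]
    by_cases h : n = 0 <;> simp [h]
  have hQQT : Q * QT = 1 := by rw [mul_comm]; exact hQTQ
  constructor
  · rintro ⟨w, ⟨hw0, hw1⟩, hwq⟩
    -- w is supported below -nq
    have hq1 : ∀ m : ℤ, q m ≤ 1 := fun m =>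
      le_hasSum hq.2 m (fun j _ => hq.1 j)
    have hwsupp : ∀ k : ℤ, k < -nq → w k = 0 := by
      intro k hk
      have hn : k + nq < 0 := by omega
      have hsumm : Summable (fun j : ℤ => w j * q (k + nq - j)) := by
        apply Summable.of_nonneg_of_le
          (fun j => mul_nonneg (hw0 j) (hq.1 _))
          (fun j => ?_) hw1.summable
        calc w j * q (k + nq - j) ≤ w j * 1 :=
              mul_le_mul_of_nonneg_left (hq1 _) (hw0 j)
          _ = w j := mul_one _
      have hzero : ∑' j : ℤ, w j * q (k + nq - j) = 0 := by
        rw [← hwq (k + nq)]; exact hp0 _ hn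
      have hterm : w k * q (k + nq - k) = 0 := by
        have := Summable.le_tsum hsumm k (fun j _ => mul_nonneg (hw0 j) (hq.1 _))
        nlinarith [mul_nonneg (hw0 k) (hq.1 (k + nq - k))]
      have : k + nq - k = nq := by ring
      rw [this] at hterm
      rcases mul_eq_zero.mp hterm with h | h
      · exact h
      · exact absurd h (ne_of_gt hqnq)
    set W : HahnSeries ℤ ℝ := toHahn w (-nq) hwsupp with hW
    have hPWQ : P = W * Q := by
      apply HahnSeries.coeff_injective
      funext n
      rw [← conv_eq]
      simpa [hP, hW, hQ, conv] using hwq n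
    intro n
    have : conv p qt n = w n := by
      have h1 : conv p qt n = (P * QT).coeff n := conv_eq P QT n
      rw [h1, hPWQ, mul_assoc, hQQT, mul_one]
      rfl
    rw [this]; exact hw0 n
  · intro hge
    set w : ℤ → ℝ := fun n => conv p qt n with hwdef
    have hwcoeff : ∀ n, (P * QT).coeff n = w n := fun n => (conv_eq P QT n).symm
    have hWQ : ∀ n : ℤ, p n = ∑' k : ℤ, w k * q (n - k) := by
      intro n
      have h1 : P * QT * Q = P := by rw [mul_assoc, hQTQ, mul_one]
      have h2 : ((P * QT) * Q).coeff n = conv (P * QT).coeff Q.coeff n :=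
        (conv_eq _ _ n).symm
      have h3 : conv (P * QT).coeff Q.coeff n = ∑' k : ℤ, w k * q (n - k) := by
        unfold conv
        exact tsum_congr (fun k => by rw [hwcoeff k]; rfl)
      rw [← h3, ← h2, h1]; rfl
    -- support of w below -nq
    have hwsupp : ∀ n : ℤ, n < -nq → w n = 0 := by
      intro n hn
      have : ∀ k : ℤ, p k * qt (n - k) = 0 := by
        intro k
        rcases lt_or_ge k 0 with h | h
        · rw [hp0 k h, zero_mul]
        · rw [hqt0 (n - k) (by omega), mul_zero]
      simp only [hwdef, conv]
      rw [tsum_congr this, tsum_zero]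
    refine ⟨w, ⟨hge, ?_⟩, hWQ⟩
    -- HasSum w 1 via ENNReal Tonelli
    have hsummand : ∀ n : ℤ, Summable (fun k : ℤ => w k * q (n - k)) := by
      intro n
      apply summable_of_ne_finset_zero (s := Finset.Icc (-nq) n)
      intro k hk
      rw [Finset.mem_Icc] at hk
      push_neg at hk
      rcases lt_or_ge k (-nq) with h | h
      · rw [hwsupp k h, zero_mul]
      · rw [hq0 (n - k) (by omega), mul_zero]
    have hofp : ∀ n : ℤ, ENNReal.ofReal (p n)
        = ∑' k : ℤ, ENNReal.ofReal (w k) * ENNReal.ofReal (q (n - k)) := by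
      intro n
      rw [hWQ n, ENNReal.ofReal_tsum_of_nonneg
        (fun k => mul_nonneg (hge k) (hq.1 _)) (hsummand n)]
      exact tsum_congr (fun k => ENNReal.ofReal_mul (hge k))
    have hsumq : ∀ k : ℤ, ∑' n : ℤ, ENNReal.ofReal (q (n - k)) = 1 := by
      intro k
      have e1 : ∑' n : ℤ, ENNReal.ofReal (q (n - k))
          = ∑' m : ℤ, ENNReal.ofReal (q m) :=
        (Equiv.subRight k).tsum_eq (fun m => ENNReal.ofReal (q m))
      rw [e1, ← ENNReal.ofReal_tsum_of_nonneg hq.1 hq.2.summable,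
        hq.2.tsum_eq, ENNReal.ofReal_one]
    have htot : ∑' k : ℤ, ENNReal.ofReal (w k) = 1 := by
      have h1 : ∑' n : ℤ, ENNReal.ofReal (p n) = 1 := by
        rw [← ENNReal.ofReal_tsum_of_nonneg hp.1 hp.2.summable,
          hp.2.tsum_eq, ENNReal.ofReal_one]
      calc ∑' k : ℤ, ENNReal.ofReal (w k)
          = ∑' k : ℤ, ENNReal.ofReal (w k) * 1 := by simp
        _ = ∑' k : ℤ, ENNReal.ofReal (w k)
              * ∑' n : ℤ, ENNReal.ofReal (q (n - k)) := by
            exact tsum_congr (fun k => by rw [hsumq k])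
        _ = ∑' k : ℤ, ∑' n : ℤ, ENNReal.ofReal (w k) * ENNReal.ofReal (q (n - k)) := by
            exact tsum_congr (fun k => (ENNReal.tsum_mul_left).symm)
        _ = ∑' n : ℤ, ∑' k : ℤ, ENNReal.ofReal (w k) * ENNReal.ofReal (q (n - k)) :=
            ENNReal.tsum_comm
        _ = ∑' n : ℤ, ENNReal.ofReal (p n) := tsum_congr (fun n => (hofp n).symm)
        _ = 1 := h1
    -- convert to HasSum w 1
    set w' : ℤ → ℝ≥0 := fun k => ⟨w k, hge k⟩ with hw'
    have hcoe : ∀ k : ℤ, (w' k : ℝ≥0∞) = ENNReal.ofReal (w k) := by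
      intro k
      rw [ENNReal.ofReal, Real.toNNReal_of_nonneg (hge k)]
      rfl
    have hne : (∑' k : ℤ, (w' k : ℝ≥0∞)) ≠ ⊤ := by
      rw [tsum_congr hcoe, htot]; exact ENNReal.one_ne_top
    have hsw' : Summable w' := ENNReal.tsum_coe_ne_top_iff_summable.mp hne
    have hsw : Summable w := by
      have : w = fun k => ((w' k : ℝ≥0) : ℝ) := by funext k; rfl
      rw [this]
      exact NNReal.summable_coe.mpr hsw'
    have htsum : ∑' k : ℤ, w k = 1 := by
      have h2 : ENNReal.ofReal (∑' k : ℤ, w k) = 1 := by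
        rw [ENNReal.ofReal_tsum_of_nonneg hge hsw, htot]
      exact ENNReal.ofReal_eq_one.mp h2
    rw [← htsum]
    exact hsw.hasSum
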